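/- Let ε > 0, p₀ and p₁ probability measures on ℝ^D, f* a measurable potential with Z_{f*}(x₀) := ∫ exp((f*(x₁) − ‖x₀−x₁‖²/2)/ε) dx₁ finite and positive p₀-a.e., and let π* be the probability measure with density π*(x₀,x₁) = p₀(x₀) exp((f*(x₁) − ‖x₀−x₁‖²/2)/ε)/Z_{f*}(x₀), assumed to have second marginal p₁. For measurable f, ξ define the nonnegative measure π^{f,ξ}(x₀,x₁) := (2πε)^{−D/2} p₀(x₀) exp(−ξ(x₀)) exp((f(x₁) − ‖x₀−x₁‖²/2)/ε). Then ε·KL(π* ‖ π^{f,ξ}) = L* − L(f,ξ), where L(f,ξ) := ε(1 − (D/2)log(2πε)) + E_{p₁}[f] − ε E_{p₀}[ξ] − ε E_{p₀} E_{z∼N(0,I)}[exp(f(x₀+√ε z)/ε − ξ(x₀))], L* := E_{p₁}[f*] − ε E_{p₀}[log Z_{f*}], and KL is the generalized divergence for nonnegative measures KL(μ‖ν) = ∫[(dμ/dν)log(dμ/dν) − dμ/dν + 1]dν. -/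

import Mathlib

set_option maxHeartbeats 1600000
open MeasureTheory Real
open scoped ENNReal NNReal

/-- Generalized Kullback–Leibler divergence between nonnegative measures. -/
noncomputable def genKL {X : Type*} [MeasurableSpace X] (μ ν : Measure X) : ℝ :=
  ∫ x, ((μ.rnDeriv ν x).toReal * Real.log (μ.rnDeriv ν x).toReal
      - (μ.rnDeriv ν x).toReal + 1) ∂ν

lemma aux_mul_log_lb' {r : ℝ} (hr : 0 < r) : -Real.exp (-1) ≤ r * Real.log r := by
  have h := Real.log_le_sub_one_of_pos (x := r⁻¹ * Real.exp (-1)) (by positivity)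
  rw [Real.log_mul (by positivity) (Real.exp_ne_zero _), Real.log_exp, Real.log_inv] at h
  have h2 : -Real.log r ≤ r⁻¹ * Real.exp (-1) := by linarith
  have h3 := mul_le_mul_of_nonneg_left h2 hr.le
  have h4 : r * r⁻¹ = 1 := mul_inv_cancel₀ hr.ne'
  rw [← mul_assoc, h4, one_mul] at h3
  linarith

lemma aux_mul_log_lb {r : ℝ} (hr : 0 ≤ r) : 1 - Real.exp (-1) ≤ r * Real.log r + 1 := by
  rcases eq_or_lt_of_le hr with h0 | h0
  · have : (0:ℝ) < Real.exp (-1) := Real.exp_pos _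
    simp [← h0]; linarith
  · have := aux_mul_log_lb' h0; linarith

lemma aux_phi_nonneg {r : ℝ} (hr : 0 ≤ r) : 0 ≤ r * Real.log r - r + 1 := by
  rcases eq_or_lt_of_le hr with h0 | h0
  · simp [← h0]
  · have h := Real.log_le_sub_one_of_pos (x := r⁻¹) (by positivity)
    rw [Real.log_inv] at h
    have h3 := mul_le_mul_of_nonneg_left h h0.le
    have h4 : r * r⁻¹ = 1 := mul_inv_cancel₀ h0.ne'
    nlinarith

lemma aux_cov (D : ℕ) {ε : ℝ} (hε : 0 < ε) (f ξ : EuclideanSpace ℝ (Fin D) → ℝ)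
    (x₀ : EuclideanSpace ℝ (Fin D)) :
    ∫ x₁, (2 * π * ε) ^ (-(D:ℝ)/2) * Real.exp (-ξ x₀) *
        Real.exp ((f x₁ - ‖x₀ - x₁‖^2/2)/ε)
    = ∫ z, Real.exp (f (x₀ + Real.sqrt ε • z)/ε - ξ x₀) *
        ((2*π) ^ (-(D:ℝ)/2) * Real.exp (-‖z‖^2/2)) := by
  have hπ : (0:ℝ) < 2 * π := by positivity
  set F : EuclideanSpace ℝ (Fin D) → ℝ := fun y =>
    (2 * π * ε) ^ (-(D:ℝ)/2) * Real.exp (-ξ x₀) *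
      Real.exp ((f (x₀ + y) - ‖y‖^2/2)/ε) with hF
  have h1 : ∫ x₁, (2 * π * ε) ^ (-(D:ℝ)/2) * Real.exp (-ξ x₀) *
        Real.exp ((f x₁ - ‖x₀ - x₁‖^2/2)/ε) = ∫ y, F y := by
    rw [← integral_add_left_eq_self x₀
      (f := fun x₁ => (2 * π * ε) ^ (-(D:ℝ)/2) * Real.exp (-ξ x₀) *
        Real.exp ((f x₁ - ‖x₀ - x₁‖^2/2)/ε))]
    congr 1; ext y
    rw [hF]; congr 3
    rw [show x₀ - (x₀ + y) = -y by abel, norm_neg]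
  have hsqne : Real.sqrt ε ^ D ≠ 0 := by positivity
  have hsq : Real.sqrt ε ^ D = ε ^ ((D:ℝ)/2) := by
    rw [Real.sqrt_eq_rpow, ← Real.rpow_natCast (ε ^ ((1:ℝ)/2)) D, ← Real.rpow_mul hε.le]
    congr 1; ring
  have h2 := Measure.integral_comp_smul_of_nonneg
    (μ := (volume : Measure (EuclideanSpace ℝ (Fin D))))
    F (Real.sqrt ε) (hR := Real.sqrt_nonneg ε)
  rw [finrank_euclideanSpace_fin] at h2
  have h3 : ∫ y, F y = (Real.sqrt ε ^ D) • ∫ z, F (Real.sqrt ε • z) := by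
    rw [h2, smul_smul, mul_inv_cancel₀ hsqne, one_smul]
  rw [h1, h3, ← integral_smul]
  congr 1; ext z
  have hn : ‖Real.sqrt ε • z‖^2 = ε * ‖z‖^2 := by
    rw [norm_smul, Real.norm_eq_abs, abs_of_nonneg (Real.sqrt_nonneg ε), mul_pow,
      Real.sq_sqrt hε.le]
  have hc : (2 * π * ε) ^ (-(D:ℝ)/2) = (2*π) ^ (-(D:ℝ)/2) * ε ^ (-(D:ℝ)/2) :=
    Real.mul_rpow hπ.le hε.le
  have he : (f (x₀ + Real.sqrt ε • z) - ε * ‖z‖^2/2)/ε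
      = f (x₀ + Real.sqrt ε • z)/ε + (-‖z‖^2/2) := by field_simp; ring
  have hs : Real.exp (f (x₀ + Real.sqrt ε • z)/ε - ξ x₀)
      = Real.exp (f (x₀ + Real.sqrt ε • z)/ε) * Real.exp (-ξ x₀) := by
    rw [← Real.exp_add]; ring_nf
  have hee : ε^((D:ℝ)/2) * ε ^ (-(D:ℝ)/2) = 1 := by
    rw [← Real.rpow_add hε, show (D:ℝ)/2 + -(D:ℝ)/2 = 0 by ring, Real.rpow_zero]
  rw [smul_eq_mul, hF]
  simp only [hn, hc, he, Real.exp_add, hs, hsq]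
  linear_combination ((2*π)^(-(D:ℝ)/2) * Real.exp (-ξ x₀) *
    Real.exp (f (x₀ + Real.sqrt ε • z)/ε) * Real.exp (-‖z‖^2/2)) * hee

lemma aux_km (D : ℕ) (ε : ℝ) (fstar : EuclideanSpace ℝ (Fin D) → ℝ)
    (hfstar : Measurable fstar) :
    Measurable (fun q : EuclideanSpace ℝ (Fin D) × EuclideanSpace ℝ (Fin D) =>
      Real.exp ((fstar q.2 - ‖q.1 - q.2‖ ^ 2 / 2) / ε)) := by fun_prop

lemma aux_fst (D : ℕ) {ε : ℝ} (hε : 0 < ε)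
    (p₀ : Measure (EuclideanSpace ℝ (Fin D))) [IsProbabilityMeasure p₀]
    (fstar : EuclideanSpace ℝ (Fin D) → ℝ) (hfstar : Measurable fstar)
    (Z : EuclideanSpace ℝ (Fin D) → ℝ) (hZmeas : Measurable Z)
    (hZdef : ∀ x₀, Z x₀ = ∫ x₁, Real.exp ((fstar x₁ - ‖x₀ - x₁‖ ^ 2 / 2) / ε))
    (hZint : ∀ x₀, Integrable
      (fun x₁ => Real.exp ((fstar x₁ - ‖x₀ - x₁‖ ^ 2 / 2) / ε)) volume)
    (hZpos : ∀ x₀, 0 < Z x₀) :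
    ((p₀.prod volume).withDensity (fun q =>
      ENNReal.ofReal (Real.exp ((fstar q.2 - ‖q.1 - q.2‖ ^ 2 / 2) / ε) / Z q.1))).map
      Prod.fst = p₀ := by
  have hGm : Measurable (fun q : EuclideanSpace ℝ (Fin D) × EuclideanSpace ℝ (Fin D) =>
      ENNReal.ofReal (Real.exp ((fstar q.2 - ‖q.1 - q.2‖ ^ 2 / 2) / ε) / Z q.1)) :=
    ENNReal.measurable_ofReal.comp ((aux_km D ε fstar hfstar).div (hZmeas.comp measurable_fst))
  ext s hs
  rw [Measure.map_apply measurable_fst hs,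
    withDensity_apply _ (measurable_fst hs)]
  have hpre : (Prod.fst ⁻¹' s : Set (EuclideanSpace ℝ (Fin D) × EuclideanSpace ℝ (Fin D)))
      = s ×ˢ Set.univ := by ext q; simp
  rw [hpre, ← Measure.prod_restrict, Measure.restrict_univ,
    lintegral_prod _ hGm.aemeasurable]
  have hinner : ∀ x₀, ∫⁻ x₁, ENNReal.ofReal
      (Real.exp ((fstar x₁ - ‖x₀ - x₁‖ ^ 2 / 2) / ε) / Z x₀) = 1 := by
    intro x₀
    rw [← ofReal_integral_eq_lintegral_ofReal ((hZint x₀).div_const _)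
      (ae_of_all _ fun x₁ => div_nonneg (Real.exp_pos _).le (hZpos x₀).le)]
    rw [integral_div, ← hZdef x₀, div_self (hZpos x₀).ne', ENNReal.ofReal_one]
  calc ∫⁻ x₀, (∫⁻ x₁, ENNReal.ofReal
        (Real.exp ((fstar x₁ - ‖x₀ - x₁‖ ^ 2 / 2) / ε) / Z x₀)) ∂p₀.restrict s
      = ∫⁻ _, 1 ∂p₀.restrict s := by
        exact lintegral_congr fun x₀ => hinner x₀
    _ = p₀ s := by simp

lemma aux_hm (D : ℕ) (ε : ℝ) (f ξ : EuclideanSpace ℝ (Fin D) → ℝ)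
    (hf : Measurable f) (hξ : Measurable ξ) :
    Measurable (fun q : EuclideanSpace ℝ (Fin D) × EuclideanSpace ℝ (Fin D) =>
      (2 * π * ε) ^ (-(D : ℝ) / 2) * Real.exp (-ξ q.1) *
        Real.exp ((f q.2 - ‖q.1 - q.2‖ ^ 2 / 2) / ε)) := by fun_prop

lemma aux_hpos (D : ℕ) {ε : ℝ} (hε : 0 < ε) (f ξ : EuclideanSpace ℝ (Fin D) → ℝ)
    (q : EuclideanSpace ℝ (Fin D) × EuclideanSpace ℝ (Fin D)) :
    0 < (2 * π * ε) ^ (-(D : ℝ) / 2) * Real.exp (-ξ q.1) *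
        Real.exp ((f q.2 - ‖q.1 - q.2‖ ^ 2 / 2) / ε) := by
  have : (0:ℝ) < 2 * π * ε := by positivity
  positivity

lemma aux_mass (D : ℕ) {ε : ℝ} (hε : 0 < ε)
    (p₀ : Measure (EuclideanSpace ℝ (Fin D))) [IsProbabilityMeasure p₀]
    (f ξ : EuclideanSpace ℝ (Fin D) → ℝ) (hf : Measurable f) (hξ : Measurable ξ)
    (hGaussInt : Integrable (fun x₀ =>
      ∫ z, Real.exp (f (x₀ + Real.sqrt ε • z) / ε - ξ x₀) *
        ((2 * π) ^ (-(D : ℝ) / 2) * Real.exp (-‖z‖ ^ 2 / 2))) p₀)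
    (hfin : ((p₀.prod volume).withDensity (fun q =>
      ENNReal.ofReal ((2 * π * ε) ^ (-(D : ℝ) / 2) * Real.exp (-ξ q.1) *
        Real.exp ((f q.2 - ‖q.1 - q.2‖ ^ 2 / 2) / ε)))) Set.univ ≠ ⊤) :
    (((p₀.prod volume).withDensity (fun q =>
      ENNReal.ofReal ((2 * π * ε) ^ (-(D : ℝ) / 2) * Real.exp (-ξ q.1) *
        Real.exp ((f q.2 - ‖q.1 - q.2‖ ^ 2 / 2) / ε)))) Set.univ).toReal
      = ∫ x₀, (∫ z, Real.exp (f (x₀ + Real.sqrt ε • z) / ε - ξ x₀) *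
        ((2 * π) ^ (-(D : ℝ) / 2) * Real.exp (-‖z‖ ^ 2 / 2))) ∂p₀ := by
  have hpos := aux_hpos D hε f ξ
  have hhm := aux_hm D ε f ξ hf hξ
  have hinner_nn : ∀ x₀ : EuclideanSpace ℝ (Fin D),
      0 ≤ ∫ z, Real.exp (f (x₀ + Real.sqrt ε • z) / ε - ξ x₀) *
        ((2 * π) ^ (-(D : ℝ) / 2) * Real.exp (-‖z‖ ^ 2 / 2)) := by
    intro x₀
    refine integral_nonneg fun z => ?_
    have : (0:ℝ) < 2 * π := by positivity
    positivity
  have hkey : ((p₀.prod volume).withDensity (fun q =>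
      ENNReal.ofReal ((2 * π * ε) ^ (-(D : ℝ) / 2) * Real.exp (-ξ q.1) *
        Real.exp ((f q.2 - ‖q.1 - q.2‖ ^ 2 / 2) / ε)))) Set.univ
      = ∫⁻ x₀, ∫⁻ x₁, ENNReal.ofReal ((2 * π * ε) ^ (-(D : ℝ) / 2) * Real.exp (-ξ x₀) *
        Real.exp ((f x₁ - ‖x₀ - x₁‖ ^ 2 / 2) / ε)) ∂volume ∂p₀ := by
    rw [withDensity_apply _ MeasurableSet.univ, Measure.restrict_univ,
      lintegral_prod _ hhm.ennreal_ofReal.aemeasurable]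
  rw [hkey] at hfin ⊢
  have hslice_meas : Measurable (fun x₀ : EuclideanSpace ℝ (Fin D) =>
      ∫⁻ x₁, ENNReal.ofReal ((2 * π * ε) ^ (-(D : ℝ) / 2) * Real.exp (-ξ x₀) *
        Real.exp ((f x₁ - ‖x₀ - x₁‖ ^ 2 / 2) / ε)) ∂volume) :=
    hhm.ennreal_ofReal.lintegral_prod_right'
  have hae : ∀ᵐ x₀ ∂p₀, (∫⁻ x₁, ENNReal.ofReal ((2 * π * ε) ^ (-(D : ℝ) / 2) *
      Real.exp (-ξ x₀) * Real.exp ((f x₁ - ‖x₀ - x₁‖ ^ 2 / 2) / ε)) ∂volume) < ⊤ :=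
    ae_lt_top hslice_meas hfin
  have heq : ∀ᵐ x₀ ∂p₀, (∫⁻ x₁, ENNReal.ofReal ((2 * π * ε) ^ (-(D : ℝ) / 2) *
      Real.exp (-ξ x₀) * Real.exp ((f x₁ - ‖x₀ - x₁‖ ^ 2 / 2) / ε)) ∂volume)
      = ENNReal.ofReal (∫ z, Real.exp (f (x₀ + Real.sqrt ε • z) / ε - ξ x₀) *
        ((2 * π) ^ (-(D : ℝ) / 2) * Real.exp (-‖z‖ ^ 2 / 2))) := by
    filter_upwards [hae] with x₀ hx₀
    have hsm : Measurable (fun x₁ => (2 * π * ε) ^ (-(D : ℝ) / 2) * Real.exp (-ξ x₀) *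
        Real.exp ((f x₁ - ‖x₀ - x₁‖ ^ 2 / 2) / ε)) :=
      by fun_prop
    have hint : Integrable (fun x₁ => (2 * π * ε) ^ (-(D : ℝ) / 2) * Real.exp (-ξ x₀) *
        Real.exp ((f x₁ - ‖x₀ - x₁‖ ^ 2 / 2) / ε)) volume := by
      refine ⟨hsm.aestronglyMeasurable, ?_⟩
      rw [hasFiniteIntegral_iff_norm]
      have hcg : ∀ x₁ : EuclideanSpace ℝ (Fin D), ENNReal.ofReal ‖(2 * π * ε) ^ (-(D : ℝ) / 2) *
          Real.exp (-ξ x₀) * Real.exp ((f x₁ - ‖x₀ - x₁‖ ^ 2 / 2) / ε)‖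
          = ENNReal.ofReal ((2 * π * ε) ^ (-(D : ℝ) / 2) *
          Real.exp (-ξ x₀) * Real.exp ((f x₁ - ‖x₀ - x₁‖ ^ 2 / 2) / ε)) := fun x₁ => by
        rw [Real.norm_eq_abs, abs_of_nonneg (hpos (x₀, x₁)).le]
      exact lt_of_le_of_lt (le_of_eq (lintegral_congr hcg)) hx₀
    rw [← ofReal_integral_eq_lintegral_ofReal hint
      (ae_of_all _ fun x₁ => (hpos (x₀, x₁)).le)]
    rw [aux_cov D hε f ξ x₀]
  rw [lintegral_congr_ae heq,
    ← ofReal_integral_eq_lintegral_ofReal hGaussInt (ae_of_all _ hinner_nn),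
    ENNReal.toReal_ofReal (integral_nonneg hinner_nn)]

theorem vareot_gap_eq_kl
    (D : ℕ) (ε : ℝ) (hε : 0 < ε)
    (p₀ p₁ : Measure (EuclideanSpace ℝ (Fin D)))
    [IsProbabilityMeasure p₀] [IsProbabilityMeasure p₁]
    (fstar f ξ : EuclideanSpace ℝ (Fin D) → ℝ)
    (hfstar : Measurable fstar) (hf : Measurable f) (hξ : Measurable ξ)
    -- the partition function of the optimal potential, finite and positive
    (Z : EuclideanSpace ℝ (Fin D) → ℝ)
    (hZdef : ∀ x₀, Z x₀ = ∫ x₁, Real.exp ((fstar x₁ - ‖x₀ - x₁‖ ^ 2 / 2) / ε))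
    (hZint : ∀ x₀, Integrable
      (fun x₁ => Real.exp ((fstar x₁ - ‖x₀ - x₁‖ ^ 2 / 2) / ε)) volume)
    (hZpos : ∀ x₀, 0 < Z x₀)
    -- the optimal plan π* and the recovered (possibly unnormalized) plan π^{f,ξ}
    (πstar πfξ : Measure (EuclideanSpace ℝ (Fin D) × EuclideanSpace ℝ (Fin D)))
    (hπstar : πstar = (p₀.prod volume).withDensity (fun q =>
      ENNReal.ofReal (Real.exp ((fstar q.2 - ‖q.1 - q.2‖ ^ 2 / 2) / ε) / Z q.1)))
    (hπfξ : πfξ = (p₀.prod volume).withDensity (fun q =>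
      ENNReal.ofReal ((2 * π * ε) ^ (-(D : ℝ) / 2) * Real.exp (-ξ q.1) *
        Real.exp ((f q.2 - ‖q.1 - q.2‖ ^ 2 / 2) / ε))))
    [IsProbabilityMeasure πstar]
    (hmarg : πstar.map Prod.snd = p₁)
    -- all integrals assumed finite
    (hfstarInt : Integrable fstar p₁) (hfInt : Integrable f p₁)
    (hξInt : Integrable ξ p₀)
    (hlogZInt : Integrable (fun x₀ => Real.log (Z x₀)) p₀)
    (hGaussInt : Integrable (fun x₀ =>
      ∫ z, Real.exp (f (x₀ + Real.sqrt ε • z) / ε - ξ x₀) *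
        ((2 * π) ^ (-(D : ℝ) / 2) * Real.exp (-‖z‖ ^ 2 / 2))) p₀)
    (hklInt : Integrable (fun q =>
      (πstar.rnDeriv πfξ q).toReal * Real.log (πstar.rnDeriv πfξ q).toReal
        - (πstar.rnDeriv πfξ q).toReal + 1) πfξ) :
    ε * genKL πstar πfξ =
      ((∫ x₁, fstar x₁ ∂p₁) - ε * ∫ x₀, Real.log (Z x₀) ∂p₀) -
      (ε * (1 - ((D : ℝ) / 2) * Real.log (2 * π * ε)) +
        (∫ x₁, f x₁ ∂p₁) - ε * (∫ x₀, ξ x₀ ∂p₀) -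
        ε * ∫ x₀, (∫ z, Real.exp (f (x₀ + Real.sqrt ε • z) / ε - ξ x₀) *
          ((2 * π) ^ (-(D : ℝ) / 2) * Real.exp (-‖z‖ ^ 2 / 2))) ∂p₀) := by
  have hπ2 : (0:ℝ) < 2 * π := by positivity
  have h2πε : (0:ℝ) < 2 * π * ε := by positivity
  -- measurability of Z and the densities
  have hZm : Measurable Z := by
    have hzz : Z = fun x₀ => ∫ x₁, Real.exp ((fstar x₁ - ‖x₀ - x₁‖ ^ 2 / 2) / ε) :=
      funext hZdef
    rw [hzz]
    exact (StronglyMeasurable.integral_prod_right'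
      (f := fun q : EuclideanSpace ℝ (Fin D) × EuclideanSpace ℝ (Fin D) =>
        Real.exp ((fstar q.2 - ‖q.1 - q.2‖ ^ 2 / 2) / ε))
      (aux_km D ε fstar hfstar).stronglyMeasurable).measurable
  have hgm : Measurable (fun q : EuclideanSpace ℝ (Fin D) × EuclideanSpace ℝ (Fin D) =>
      Real.exp ((fstar q.2 - ‖q.1 - q.2‖ ^ 2 / 2) / ε) / Z q.1) := (aux_km D ε fstar hfstar).div (hZm.comp measurable_fst)
  have hhm := aux_hm D ε f ξ hf hξ
  have hgpos : ∀ q : EuclideanSpace ℝ (Fin D) × EuclideanSpace ℝ (Fin D),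
      0 < Real.exp ((fstar q.2 - ‖q.1 - q.2‖ ^ 2 / 2) / ε) / Z q.1 := fun q => div_pos (Real.exp_pos _) (hZpos q.1)
  have hhpos := aux_hpos D hε f ξ
  -- the base product measure expressed through πfξ
  have hμinv : p₀.prod volume = πfξ.withDensity (fun q =>
      (ENNReal.ofReal ((2 * π * ε) ^ (-(D : ℝ) / 2) * Real.exp (-ξ q.1) * Real.exp ((f q.2 - ‖q.1 - q.2‖ ^ 2 / 2) / ε)))⁻¹) := by
    rw [hπfξ]
    exact (withDensity_inv_same hhm.ennreal_ofReal
      (ae_of_all _ fun q => by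
        simp only [ne_eq, ENNReal.ofReal_eq_zero, not_le]; exact hhpos q)
      (ae_of_all _ fun q => ENNReal.ofReal_ne_top)).symm
  have hπstar2 : πstar = πfξ.withDensity (fun q =>
      (ENNReal.ofReal ((2 * π * ε) ^ (-(D : ℝ) / 2) * Real.exp (-ξ q.1) * Real.exp ((f q.2 - ‖q.1 - q.2‖ ^ 2 / 2) / ε)))⁻¹ * ENNReal.ofReal (Real.exp ((fstar q.2 - ‖q.1 - q.2‖ ^ 2 / 2) / ε) / Z q.1)) := by
    rw [hπstar, hμinv, ← withDensity_mul _ (f := fun q =>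
      (ENNReal.ofReal ((2 * π * ε) ^ (-(D : ℝ) / 2) * Real.exp (-ξ q.1) * Real.exp ((f q.2 - ‖q.1 - q.2‖ ^ 2 / 2) / ε)))⁻¹) (measurable_inv.comp hhm.ennreal_ofReal) hgm.ennreal_ofReal]
    rfl
  have hac : πstar ≪ πfξ := by
    rw [hπstar2]; exact withDensity_absolutelyContinuous _ _
  -- finiteness of πfξ
  have hcpos : (0:ℝ) < 1 - Real.exp (-1) := by
    have h1 : Real.exp (-1) < Real.exp 0 := Real.exp_lt_exp.mpr (by norm_num)
    rw [Real.exp_zero] at h1; linarith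
  have hfin : πfξ Set.univ ≠ ⊤ := by
    intro htop
    have hρm := Measure.measurable_rnDeriv πstar πfξ
    have hb : ∀ q, ENNReal.ofReal (1 - Real.exp (-1)) ≤
        ENNReal.ofReal ((πstar.rnDeriv πfξ q).toReal *
          Real.log (πstar.rnDeriv πfξ q).toReal - (πstar.rnDeriv πfξ q).toReal + 1)
        + πstar.rnDeriv πfξ q := by
      intro q
      have hr0 : 0 ≤ (πstar.rnDeriv πfξ q).toReal := ENNReal.toReal_nonneg
      have h1 : ENNReal.ofReal (1 - Real.exp (-1)) ≤
          ENNReal.ofReal (((πstar.rnDeriv πfξ q).toReal *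
            Real.log (πstar.rnDeriv πfξ q).toReal - (πstar.rnDeriv πfξ q).toReal + 1)
            + (πstar.rnDeriv πfξ q).toReal) :=
        ENNReal.ofReal_le_ofReal (by have := aux_mul_log_lb hr0; linarith)
      refine h1.trans ?_
      rw [ENNReal.ofReal_add (aux_phi_nonneg hr0) hr0]
      exact add_le_add le_rfl ENNReal.ofReal_toReal_le
    have h2 : ∫⁻ _, ENNReal.ofReal (1 - Real.exp (-1)) ∂πfξ ≤
        ∫⁻ q, (ENNReal.ofReal ((πstar.rnDeriv πfξ q).toReal *
          Real.log (πstar.rnDeriv πfξ q).toReal - (πstar.rnDeriv πfξ q).toReal + 1)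
          + πstar.rnDeriv πfξ q) ∂πfξ := lintegral_mono hb
    rw [lintegral_const, htop, ENNReal.mul_top (by
      simp only [ne_eq, ENNReal.ofReal_eq_zero, not_le]; exact hcpos)] at h2
    have h4 : ∫⁻ q, ENNReal.ofReal ((πstar.rnDeriv πfξ q).toReal *
        Real.log (πstar.rnDeriv πfξ q).toReal - (πstar.rnDeriv πfξ q).toReal + 1) ∂πfξ
        ≠ ⊤ := by
      have h5 := (hasFiniteIntegral_iff_norm _).mp hklInt.hasFiniteIntegral
      refine ne_top_of_le_ne_top h5.ne (lintegral_mono fun q => ?_)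
      rw [Real.norm_eq_abs]
      exact ENNReal.ofReal_le_ofReal (le_abs_self _)
    have h3 : ∫⁻ q, (ENNReal.ofReal ((πstar.rnDeriv πfξ q).toReal *
        Real.log (πstar.rnDeriv πfξ q).toReal - (πstar.rnDeriv πfξ q).toReal + 1)
        + πstar.rnDeriv πfξ q) ∂πfξ ≤
        (∫⁻ q, ENNReal.ofReal ((πstar.rnDeriv πfξ q).toReal *
          Real.log (πstar.rnDeriv πfξ q).toReal - (πstar.rnDeriv πfξ q).toReal + 1) ∂πfξ)
        + 1 := by
      rw [lintegral_add_right _ hρm]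
      refine add_le_add le_rfl (Measure.lintegral_rnDeriv_le.trans ?_)
      simp
    have h6 := top_le_iff.mp (h2.trans h3)
    exact ENNReal.add_ne_top.mpr ⟨h4, ENNReal.one_ne_top⟩ h6
  haveI hfinM : IsFiniteMeasure πfξ := ⟨lt_top_iff_ne_top.mpr hfin⟩
  -- identification of the Radon–Nikodym derivative
  have hρae : πstar.rnDeriv πfξ =ᵐ[πfξ] fun q =>
      (ENNReal.ofReal ((2 * π * ε) ^ (-(D : ℝ) / 2) * Real.exp (-ξ q.1) * Real.exp ((f q.2 - ‖q.1 - q.2‖ ^ 2 / 2) / ε)))⁻¹ * ENNReal.ofReal (Real.exp ((fstar q.2 - ‖q.1 - q.2‖ ^ 2 / 2) / ε) / Z q.1) := by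
    rw [hπstar2]
    exact Measure.rnDeriv_withDensity πfξ (hhm.ennreal_ofReal.inv.mul hgm.ennreal_ofReal)
  have hrr : ∀ q : EuclideanSpace ℝ (Fin D) × EuclideanSpace ℝ (Fin D),
      ((ENNReal.ofReal ((2 * π * ε) ^ (-(D : ℝ) / 2) * Real.exp (-ξ q.1) * Real.exp ((f q.2 - ‖q.1 - q.2‖ ^ 2 / 2) / ε)))⁻¹ * ENNReal.ofReal (Real.exp ((fstar q.2 - ‖q.1 - q.2‖ ^ 2 / 2) / ε) / Z q.1)).toReal
      = (Real.exp ((fstar q.2 - ‖q.1 - q.2‖ ^ 2 / 2) / ε) / Z q.1) / ((2 * π * ε) ^ (-(D : ℝ) / 2) * Real.exp (-ξ q.1) * Real.exp ((f q.2 - ‖q.1 - q.2‖ ^ 2 / 2) / ε)) := by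
    intro q
    rw [ENNReal.toReal_mul, ENNReal.toReal_inv, ENNReal.toReal_ofReal (hhpos q).le,
      ENNReal.toReal_ofReal (hgpos q).le, inv_mul_eq_div]
  -- integrability facts on πfξ
  have int_r : Integrable (fun q => (πstar.rnDeriv πfξ q).toReal) πfξ :=
    Measure.integrable_toReal_rnDeriv
  have int_rlogr : Integrable (fun q => (πstar.rnDeriv πfξ q).toReal *
      Real.log (πstar.rnDeriv πfξ q).toReal) πfξ :=
    ((hklInt.add int_r).sub (integrable_const 1)).congr (ae_of_all _ fun q => by
      simp only [Pi.add_apply, Pi.sub_apply]; ring)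
  -- splitting genKL
  have hsplit : genKL πstar πfξ
      = (∫ q, (πstar.rnDeriv πfξ q).toReal * Real.log (πstar.rnDeriv πfξ q).toReal ∂πfξ)
        - 1 + (πfξ Set.univ).toReal := by
    unfold genKL
    have int_sub : Integrable (fun q => (πstar.rnDeriv πfξ q).toReal *
        Real.log (πstar.rnDeriv πfξ q).toReal - (πstar.rnDeriv πfξ q).toReal) πfξ :=
      int_rlogr.sub int_r
    rw [integral_add int_sub (integrable_const 1),
      integral_sub int_rlogr int_r, integral_const, smul_eq_mul, mul_one,
      Measure.integral_toReal_rnDeriv hac, probReal_univ, measureReal_def]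
  -- transforming the entropy integral
  have hstep1 : ∫ q, (πstar.rnDeriv πfξ q).toReal *
      Real.log (πstar.rnDeriv πfξ q).toReal ∂πfξ
      = ∫ q, ((Real.exp ((fstar q.2 - ‖q.1 - q.2‖ ^ 2 / 2) / ε) / Z q.1) / ((2 * π * ε) ^ (-(D : ℝ) / 2) * Real.exp (-ξ q.1) * Real.exp ((f q.2 - ‖q.1 - q.2‖ ^ 2 / 2) / ε))) * Real.log ((Real.exp ((fstar q.2 - ‖q.1 - q.2‖ ^ 2 / 2) / ε) / Z q.1) / ((2 * π * ε) ^ (-(D : ℝ) / 2) * Real.exp (-ξ q.1) * Real.exp ((f q.2 - ‖q.1 - q.2‖ ^ 2 / 2) / ε))) ∂πfξ :=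
    integral_congr_ae (hρae.mono fun q hq => by simp only [hq, hrr q])
  have hstep2 : ∫ q, ((Real.exp ((fstar q.2 - ‖q.1 - q.2‖ ^ 2 / 2) / ε) / Z q.1) / ((2 * π * ε) ^ (-(D : ℝ) / 2) * Real.exp (-ξ q.1) * Real.exp ((f q.2 - ‖q.1 - q.2‖ ^ 2 / 2) / ε))) * Real.log ((Real.exp ((fstar q.2 - ‖q.1 - q.2‖ ^ 2 / 2) / ε) / Z q.1) / ((2 * π * ε) ^ (-(D : ℝ) / 2) * Real.exp (-ξ q.1) * Real.exp ((f q.2 - ‖q.1 - q.2‖ ^ 2 / 2) / ε))) ∂πfξ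
      = ∫ q, (Real.exp ((fstar q.2 - ‖q.1 - q.2‖ ^ 2 / 2) / ε) / Z q.1) * Real.log ((Real.exp ((fstar q.2 - ‖q.1 - q.2‖ ^ 2 / 2) / ε) / Z q.1) / ((2 * π * ε) ^ (-(D : ℝ) / 2) * Real.exp (-ξ q.1) * Real.exp ((f q.2 - ‖q.1 - q.2‖ ^ 2 / 2) / ε))) ∂(p₀.prod volume) := by
    rw [hπfξ,
      show (fun q : EuclideanSpace ℝ (Fin D) × EuclideanSpace ℝ (Fin D) =>
        ENNReal.ofReal ((2 * π * ε) ^ (-(D : ℝ) / 2) * Real.exp (-ξ q.1) * Real.exp ((f q.2 - ‖q.1 - q.2‖ ^ 2 / 2) / ε)))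
        = fun q : EuclideanSpace ℝ (Fin D) × EuclideanSpace ℝ (Fin D) =>
          ((Real.toNNReal ((2 * π * ε) ^ (-(D : ℝ) / 2) * Real.exp (-ξ q.1) * Real.exp ((f q.2 - ‖q.1 - q.2‖ ^ 2 / 2) / ε)) : ℝ≥0) : ℝ≥0∞) from rfl,
      integral_withDensity_eq_integral_smul hhm.real_toNNReal _]
    refine integral_congr_ae (ae_of_all _ fun q => ?_)
    simp only [NNReal.smul_def, smul_eq_mul, Real.coe_toNNReal _ (hhpos q).le]
    have hcan : ((2 * π * ε) ^ (-(D : ℝ) / 2) * Real.exp (-ξ q.1) * Real.exp ((f q.2 - ‖q.1 - q.2‖ ^ 2 / 2) / ε)) * ((Real.exp ((fstar q.2 - ‖q.1 - q.2‖ ^ 2 / 2) / ε) / Z q.1) / ((2 * π * ε) ^ (-(D : ℝ) / 2) * Real.exp (-ξ q.1) * Real.exp ((f q.2 - ‖q.1 - q.2‖ ^ 2 / 2) / ε))) = (Real.exp ((fstar q.2 - ‖q.1 - q.2‖ ^ 2 / 2) / ε) / Z q.1) := by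
      rw [← mul_div_assoc, mul_comm ((2 * π * ε) ^ (-(D : ℝ) / 2) * Real.exp (-ξ q.1) * Real.exp ((f q.2 - ‖q.1 - q.2‖ ^ 2 / 2) / ε)) (Real.exp ((fstar q.2 - ‖q.1 - q.2‖ ^ 2 / 2) / ε) / Z q.1), mul_div_assoc,
        div_self (hhpos q).ne', mul_one]
    rw [← mul_assoc, hcan]
  have hstep3 : ∫ q, (Real.exp ((fstar q.2 - ‖q.1 - q.2‖ ^ 2 / 2) / ε) / Z q.1) * Real.log ((Real.exp ((fstar q.2 - ‖q.1 - q.2‖ ^ 2 / 2) / ε) / Z q.1) / ((2 * π * ε) ^ (-(D : ℝ) / 2) * Real.exp (-ξ q.1) * Real.exp ((f q.2 - ‖q.1 - q.2‖ ^ 2 / 2) / ε))) ∂(p₀.prod volume)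
      = ∫ q, Real.log ((Real.exp ((fstar q.2 - ‖q.1 - q.2‖ ^ 2 / 2) / ε) / Z q.1) / ((2 * π * ε) ^ (-(D : ℝ) / 2) * Real.exp (-ξ q.1) * Real.exp ((f q.2 - ‖q.1 - q.2‖ ^ 2 / 2) / ε))) ∂πstar := by
    rw [hπstar,
      show (fun q : EuclideanSpace ℝ (Fin D) × EuclideanSpace ℝ (Fin D) =>
        ENNReal.ofReal (Real.exp ((fstar q.2 - ‖q.1 - q.2‖ ^ 2 / 2) / ε) / Z q.1))
        = fun q : EuclideanSpace ℝ (Fin D) × EuclideanSpace ℝ (Fin D) =>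
          ((Real.toNNReal (Real.exp ((fstar q.2 - ‖q.1 - q.2‖ ^ 2 / 2) / ε) / Z q.1) : ℝ≥0) : ℝ≥0∞) from rfl,
      integral_withDensity_eq_integral_smul hgm.real_toNNReal _]
    refine integral_congr_ae (ae_of_all _ fun q => ?_)
    simp only [NNReal.smul_def, smul_eq_mul, Real.coe_toNNReal _ (hgpos q).le]
  -- the first marginal of πstar
  have hfst : πstar.map Prod.fst = p₀ := by
    rw [hπstar]; exact aux_fst D hε p₀ fstar hfstar Z hZm hZdef hZint hZpos
  -- integrability over πstar
  have i1 : Integrable (fun q : EuclideanSpace ℝ (Fin D) × EuclideanSpace ℝ (Fin D) =>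
      fstar q.2) πstar :=
    (integrable_map_measure (by rw [hmarg]; exact hfstarInt.aestronglyMeasurable)
      measurable_snd.aemeasurable).mp (by rw [hmarg]; exact hfstarInt)
  have i2 : Integrable (fun q : EuclideanSpace ℝ (Fin D) × EuclideanSpace ℝ (Fin D) =>
      f q.2) πstar :=
    (integrable_map_measure (by rw [hmarg]; exact hfInt.aestronglyMeasurable)
      measurable_snd.aemeasurable).mp (by rw [hmarg]; exact hfInt)
  have i3 : Integrable (fun q : EuclideanSpace ℝ (Fin D) × EuclideanSpace ℝ (Fin D) =>
      Real.log (Z q.1)) πstar :=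
    (integrable_map_measure (by rw [hfst]; exact hlogZInt.aestronglyMeasurable)
      measurable_fst.aemeasurable).mp (by rw [hfst]; exact hlogZInt)
  have i4 : Integrable (fun q : EuclideanSpace ℝ (Fin D) × EuclideanSpace ℝ (Fin D) =>
      ξ q.1) πstar :=
    (integrable_map_measure (by rw [hfst]; exact hξInt.aestronglyMeasurable)
      measurable_fst.aemeasurable).mp (by rw [hfst]; exact hξInt)
  -- integral transfers to the marginals
  have e1 : ∫ q : EuclideanSpace ℝ (Fin D) × EuclideanSpace ℝ (Fin D), fstar q.2 ∂πstar
      = ∫ x₁, fstar x₁ ∂p₁ := by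
    rw [← hmarg, integral_map measurable_snd.aemeasurable
      (by rw [hmarg]; exact hfstarInt.aestronglyMeasurable)]
  have e2 : ∫ q : EuclideanSpace ℝ (Fin D) × EuclideanSpace ℝ (Fin D), f q.2 ∂πstar
      = ∫ x₁, f x₁ ∂p₁ := by
    rw [← hmarg, integral_map measurable_snd.aemeasurable
      (by rw [hmarg]; exact hfInt.aestronglyMeasurable)]
  have e3 : ∫ q : EuclideanSpace ℝ (Fin D) × EuclideanSpace ℝ (Fin D),
      Real.log (Z q.1) ∂πstar = ∫ x₀, Real.log (Z x₀) ∂p₀ := by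
    rw [← hfst, integral_map measurable_fst.aemeasurable
      (by rw [hfst]; exact hlogZInt.aestronglyMeasurable)]
  have e4 : ∫ q : EuclideanSpace ℝ (Fin D) × EuclideanSpace ℝ (Fin D), ξ q.1 ∂πstar
      = ∫ x₀, ξ x₀ ∂p₀ := by
    rw [← hfst, integral_map measurable_fst.aemeasurable
      (by rw [hfst]; exact hξInt.aestronglyMeasurable)]
  -- pointwise logarithm computation
  have hlog : ∀ q : EuclideanSpace ℝ (Fin D) × EuclideanSpace ℝ (Fin D),
      ε * Real.log ((Real.exp ((fstar q.2 - ‖q.1 - q.2‖ ^ 2 / 2) / ε) / Z q.1) / ((2 * π * ε) ^ (-(D : ℝ) / 2) * Real.exp (-ξ q.1) * Real.exp ((f q.2 - ‖q.1 - q.2‖ ^ 2 / 2) / ε)))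
      = fstar q.2 - f q.2 - ε * Real.log (Z q.1) + ε * ξ q.1
        + ε * ((D : ℝ) / 2 * Real.log (2 * π * ε)) := by
    intro q
    rw [Real.log_div (hgpos q).ne' (hhpos q).ne',
      Real.log_div (Real.exp_ne_zero _) (hZpos q.1).ne', Real.log_exp,
      Real.log_mul (by positivity) (Real.exp_ne_zero _),
      Real.log_mul (Real.rpow_pos_of_pos h2πε _).ne' (Real.exp_ne_zero _),
      Real.log_exp, Real.log_exp, Real.log_rpow h2πε]
    field_simp
    ring
  -- the total mass of πfξ
  have hM : (πfξ Set.univ).toReal = ∫ x₀, (∫ z, Real.exp (f (x₀ + Real.sqrt ε • z) / ε - ξ x₀) * ((2 * π) ^ (-(D : ℝ) / 2) * Real.exp (-‖z‖ ^ 2 / 2))) ∂p₀ := by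
    rw [hπfξ]
    exact aux_mass D hε p₀ f ξ hf hξ hGaussInt (by rw [← hπfξ]; exact hfin)
  -- value of the entropy integral
  have hεI : ε * ∫ q, (πstar.rnDeriv πfξ q).toReal *
      Real.log (πstar.rnDeriv πfξ q).toReal ∂πfξ
      = (∫ x₁, fstar x₁ ∂p₁) - (∫ x₁, f x₁ ∂p₁) - ε * (∫ x₀, Real.log (Z x₀) ∂p₀)
        + ε * (∫ x₀, ξ x₀ ∂p₀) + ε * ((D : ℝ) / 2 * Real.log (2 * π * ε)) := by
    rw [hstep1, hstep2, hstep3, ← integral_const_mul]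
    rw [integral_congr_ae (ae_of_all _ hlog)]
    have ic : Integrable (fun q : EuclideanSpace ℝ (Fin D) × EuclideanSpace ℝ (Fin D) =>
        fstar q.2 - f q.2) πstar := i1.sub i2
    have ib : Integrable (fun q : EuclideanSpace ℝ (Fin D) × EuclideanSpace ℝ (Fin D) =>
        fstar q.2 - f q.2 - ε * Real.log (Z q.1)) πstar := ic.sub (i3.const_mul ε)
    have ia : Integrable (fun q : EuclideanSpace ℝ (Fin D) × EuclideanSpace ℝ (Fin D) =>
        fstar q.2 - f q.2 - ε * Real.log (Z q.1) + ε * ξ q.1) πstar := ib.add (i4.const_mul ε)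
    rw [integral_add ia (integrable_const _),
      integral_add ib (i4.const_mul ε),
      integral_sub ic (i3.const_mul ε), integral_sub i1 i2,
      integral_const_mul, integral_const_mul, integral_const, probReal_univ,
      one_smul, e1, e2, e3, e4]
  -- conclusion
  rw [hsplit]
  have hfinal : ε * ((∫ q, (πstar.rnDeriv πfξ q).toReal *
      Real.log (πstar.rnDeriv πfξ q).toReal ∂πfξ) - 1 + (πfξ Set.univ).toReal)
      = ε * (∫ q, (πstar.rnDeriv πfξ q).toReal *
          Real.log (πstar.rnDeriv πfξ q).toReal ∂πfξ) - ε
        + ε * (πfξ Set.univ).toReal := by ring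
  rw [hfinal, hεI, hM]
  ring
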